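/- For all a, b > 0 with a ≠ b, one has (1/2)·D(a,b) + (1/2)·H(a,b) < Q(a,b). -/

import Mathlib

noncomputable def harmonicMean (a b : ℝ) : ℝ := 2 * a * b / (a + b)

noncomputable def quadraticMean (a b : ℝ) : ℝ := Real.sqrt ((a ^ 2 + b ^ 2) / 2)

noncomputable def contraD (a b : ℝ) : ℝ := (a ^ 3 + b ^ 3) / (a ^ 2 + b ^ 2)

theorem stmt_6 (a b : ℝ) (ha : 0 < a) (hb : 0 < b) (hab : a ≠ b) :
    (1 / 2) * contraD a b + (1 / 2) * harmonicMean a b < quadraticMean a b := by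
  have hs : 0 < a + b := by linarith
  have hq : 0 < a ^ 2 + b ^ 2 := by positivity
  have hd : (a - b) ^ 2 > 0 := by
    have : a - b ≠ 0 := sub_ne_zero.mpr hab
    positivity
  have hx : 0 ≤ (1 / 2) * contraD a b + (1 / 2) * harmonicMean a b := by
    unfold contraD harmonicMean
    positivity
  rw [quadraticMean, show ((1:ℝ)/2) * contraD a b + (1/2) * harmonicMean a b
    = Real.sqrt (((1/2) * contraD a b + (1/2) * harmonicMean a b) ^ 2) from
    (Real.sqrt_sq hx).symm]
  apply Real.sqrt_lt_sqrt (by positivity)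
  unfold contraD harmonicMean
  have h1 : (a:ℝ)^2+b^2 ≠ 0 := by positivity
  have h2 : (a:ℝ)+b ≠ 0 := by positivity
  rw [show (1:ℝ)/2*((a^3+b^3)/(a^2+b^2)) + 1/2*(2*a*b/(a+b))
      = ((a^3+b^3)*(a+b)+2*a*b*(a^2+b^2))/(2*((a^2+b^2)*(a+b))) by
        field_simp,
    div_pow, div_lt_div_iff₀ (by positivity) (by norm_num)]
  ring_nf
  nlinarith [sq_nonneg (a-b), sq_nonneg (a+b), sq_nonneg (a^2-b^2), mul_pos ha hb,
    mul_pos hq hd, mul_pos (mul_pos hq hd) (mul_pos ha hb),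
    mul_pos (mul_pos hs hs) (mul_pos hq hd), sq_nonneg (a^2+b^2-2*a*b),
    mul_pos (mul_pos (mul_pos ha hb) (mul_pos ha hb)) hd,
    mul_pos (mul_pos hq hq) hd]
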